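/- Define γ₁² : [0,1] → S³ ⊂ ℝ⁴ by γ₁²(t) = ( (1/4)cos(3πt) + (3/4)cos(πt), (√3/4)sin(3πt) + (√3/4)sin(πt), (√3/4)cos(πt) − (√3/4)cos(3πt), (3/4)sin(πt) − (1/4)sin(3πt) ). Then γ₁² is convex: for every nonzero h ∈ ℝ⁴, γ₁² intersects the hyperplane {x ∈ ℝ⁴ : h·x = 0} with total multiplicity at most 3 on (0,1). -/

import Mathlib

open Set Real

/-- The Euclidean dot product on `ℝ^k`. -/
def dotv {k : ℕ} (v w : Fin k → ℝ) : ℝ := ∑ i, v i * w i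

/-- The curve `γ` intersects the hyperplane `{x : h·x = 0}` with total multiplicity at
most `N` on the open interval `(a,b)`: for any distinct points `t₁, …, t_j ∈ (a,b)` and
positive integers `m₁, …, m_j` such that `f = h·γ` vanishes at `t_i` together with its
first `m_i − 1` derivatives, one has `m₁ + ⋯ + m_j ≤ N`. -/
def MultAtMost {k : ℕ} (γ : ℝ → Fin k → ℝ) (a b : ℝ) (h : Fin k → ℝ) (N : ℕ) : Prop :=
  ∀ (j : ℕ) (t : Fin j → ℝ) (m : Fin j → ℕ),
    (∀ i, t i ∈ Ioo a b) → Function.Injective t → (∀ i, 1 ≤ m i) →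
    (∀ i, ∀ l < m i, iteratedDeriv l (fun s => dotv h (γ s)) (t i) = 0) →
    ∑ i, m i ≤ N

/-- The curve `γ₁² : [0,1] → S³`. -/
noncomputable def gamma12 (t : ℝ) : Fin 4 → ℝ :=
  ![1 / 4 * Real.cos (3 * π * t) + 3 / 4 * Real.cos (π * t),
    Real.sqrt 3 / 4 * Real.sin (3 * π * t) + Real.sqrt 3 / 4 * Real.sin (π * t),
    Real.sqrt 3 / 4 * Real.cos (π * t) - Real.sqrt 3 / 4 * Real.cos (3 * π * t),
    3 / 4 * Real.sin (π * t) - 1 / 4 * Real.sin (3 * π * t)]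

namespace Stmt16Aux

open Complex Polynomial

lemma hasDerivAt_expc (μ : ℂ) (x : ℝ) :
    HasDerivAt (fun t : ℝ => Complex.exp (μ * t)) (μ * Complex.exp (μ * x)) x := by
  have h1 : HasDerivAt (fun t : ℝ => (t : ℂ)) 1 x := by
    simpa using (hasDerivAt_id x).ofReal_comp
  have h2 := (h1.const_mul μ).cexp
  simpa [mul_comm] using h2

lemma iter_sum4 (q0 q1 q2 q3 μ0 μ1 μ2 μ3 : ℂ) (n : ℕ) :
    iteratedDeriv n (fun t : ℝ => q0 * Complex.exp (μ0*t) + q1 * Complex.exp (μ1*t)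
      + q2 * Complex.exp (μ2*t) + q3 * Complex.exp (μ3*t))
    = fun t : ℝ => q0 * μ0^n * Complex.exp (μ0*t) + q1 * μ1^n * Complex.exp (μ1*t)
      + q2 * μ2^n * Complex.exp (μ2*t) + q3 * μ3^n * Complex.exp (μ3*t) := by
  induction n with
  | zero => funext x; simp
  | succ n ih =>
    rw [iteratedDeriv_succ, ih]
    funext x
    have H : HasDerivAt (fun t : ℝ => q0 * μ0^n * Complex.exp (μ0*t) + q1 * μ1^n * Complex.exp (μ1*t)
        + q2 * μ2^n * Complex.exp (μ2*t) + q3 * μ3^n * Complex.exp (μ3*t))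
        (q0 * μ0^(n+1) * Complex.exp (μ0*x) + q1 * μ1^(n+1) * Complex.exp (μ1*x)
        + q2 * μ2^(n+1) * Complex.exp (μ2*x) + q3 * μ3^(n+1) * Complex.exp (μ3*x)) x := by
      have h0 := (hasDerivAt_expc μ0 x).const_mul (q0 * μ0^n)
      have h1 := (hasDerivAt_expc μ1 x).const_mul (q1 * μ1^n)
      have h2 := (hasDerivAt_expc μ2 x).const_mul (q2 * μ2^n)
      have h3 := (hasDerivAt_expc μ3 x).const_mul (q3 * μ3^n)
      refine (((h0.add h1).add h2).add h3).congr_deriv ?_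
      ring
    exact H.deriv

lemma iteratedDeriv_clm (g : ℝ →L[ℝ] ℂ) (f : ℝ → ℝ) (n : ℕ) (hf : ContDiff ℝ n f) (x : ℝ) :
    iteratedDeriv n (fun s => g (f s)) x = g (iteratedDeriv n f x) := by
  rw [iteratedDeriv_eq_iteratedFDeriv, iteratedDeriv_eq_iteratedFDeriv,
    ← Function.comp_def g f, g.iteratedFDeriv_comp_left hf.contDiffAt le_rfl]
  exact congrFun (g.compContinuousMultilinearMap_coe (iteratedFDeriv ℝ n f x)) _

lemma sum_count_le {α : Type*} [DecidableEq α] (s : Multiset α) (T : Finset α) :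
    ∑ x ∈ T, s.count x ≤ Multiset.card s := by
  calc ∑ x ∈ T, s.count x = ∑ x ∈ T ∩ s.toFinset, s.count x := by
        refine (Finset.sum_subset Finset.inter_subset_left ?_).symm
        intro x hx hx2
        rw [Multiset.count_eq_zero]
        exact fun hc => hx2 (Finset.mem_inter.mpr ⟨hx, Multiset.mem_toFinset.mpr hc⟩)
    _ ≤ ∑ x ∈ s.toFinset, s.count x :=
        Finset.sum_le_sum_of_subset Finset.inter_subset_right
    _ = Multiset.card s := Multiset.toFinset_sum_count_eq s

set_option maxHeartbeats 1000000 in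
theorem main : ∀ h : Fin 4 → ℝ, h ≠ 0 → MultAtMost gamma12 0 1 h 3 := by
  classical
  intro h hne j t m ht hinj hm hder
  set f : ℝ → ℝ := fun s => dotv h (gamma12 s) with hfdef
  set a : ℝ := 3/4 * h 0 + Real.sqrt 3 / 4 * h 2 with ha
  set b : ℝ := Real.sqrt 3 / 4 * h 1 + 3/4 * h 3 with hb
  set c : ℝ := 1/4 * h 0 - Real.sqrt 3 / 4 * h 2 with hc
  set d : ℝ := Real.sqrt 3 / 4 * h 1 - 1/4 * h 3 with hd
  set q0 : ℂ := (c : ℂ) + (d : ℂ) * Complex.I with hq0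
  set q1 : ℂ := (a : ℂ) + (b : ℂ) * Complex.I with hq1
  set q2 : ℂ := (a : ℂ) - (b : ℂ) * Complex.I with hq2
  set q3 : ℂ := (c : ℂ) - (d : ℂ) * Complex.I with hq3
  set Q : Polynomial ℂ := C q3 * X^3 + C q2 * X^2 + C q1 * X + C q0 with hQ
  -- smoothness of f
  have hsmooth : ∀ n : ℕ, ContDiff ℝ n f := by
    intro n
    rw [hfdef]
    unfold dotv gamma12
    simp only [Fin.sum_univ_four, Matrix.cons_val_zero, Matrix.cons_val_one, Matrix.head_cons,
      Matrix.cons_val_two, Matrix.tail_cons, Matrix.cons_val_three]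
    have hl : ∀ cc : ℝ, ContDiff ℝ n fun s : ℝ => cc * s := fun cc => contDiff_const.mul contDiff_id
    have hc3 := (hl (3*π)).cos
    have hc1 := (hl π).cos
    have hs3 := (hl (3*π)).sin
    have hs1 := (hl π).sin
    exact ((((contDiff_const.mul ((contDiff_const.mul hc3).add (contDiff_const.mul hc1))).add
      (contDiff_const.mul ((contDiff_const.mul hs3).add (contDiff_const.mul hs1)))).add
      (contDiff_const.mul ((contDiff_const.mul hc1).sub (contDiff_const.mul hc3)))).add
      (contDiff_const.mul ((contDiff_const.mul hs1).sub (contDiff_const.mul hs3))))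
  -- the key identity
  have hfH : (fun s : ℝ => q0 * Complex.exp ((π:ℂ)*Complex.I*(-3)*s)
      + q1 * Complex.exp ((π:ℂ)*Complex.I*(-1)*s)
      + q2 * Complex.exp ((π:ℂ)*Complex.I*s)
      + q3 * Complex.exp ((π:ℂ)*Complex.I*3*s))
      = fun s : ℝ => (2:ℂ) * (f s : ℂ) := by
    funext s
    have A0 : (π:ℂ)*Complex.I*(-3)*(s:ℂ) = -(3*(π:ℂ)*(s:ℂ))*Complex.I := by ring
    have A1 : (π:ℂ)*Complex.I*(-1)*(s:ℂ) = -((π:ℂ)*(s:ℂ))*Complex.I := by ring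
    have A2 : (π:ℂ)*Complex.I*(s:ℂ) = (π:ℂ)*(s:ℂ)*Complex.I := by ring
    have A3 : (π:ℂ)*Complex.I*3*(s:ℂ) = 3*(π:ℂ)*(s:ℂ)*Complex.I := by ring
    simp only [hfdef, dotv, gamma12, Fin.sum_univ_four, Matrix.cons_val_zero, Matrix.cons_val_one,
      Matrix.head_cons, Matrix.cons_val_two, Matrix.tail_cons, Matrix.cons_val_three]
    rw [hq0, hq1, hq2, hq3, ha, hb, hc, hd]
    push_cast
    simp only [Complex.cos, Complex.sin]
    rw [A0, A1, A2, A3]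
    ring
  -- the points on the circle
  set z : Fin j → ℂ := fun i => Complex.exp ((π:ℂ)*Complex.I*(t i)) with hzdef
  have hz0 : ∀ i, z i ≠ 0 := fun i => Complex.exp_ne_zero _
  set u : Fin j → ℂ := fun i => z i ^ 2 with hudef
  -- the linear conditions
  have hE : ∀ i, ∀ l, l < m i →
      q0*(-3:ℂ)^l + q1*(-1:ℂ)^l*(z i)^2 + q2*(z i)^4 + q3*(3:ℂ)^l*(z i)^6 = 0 := by
    intro i l hl
    have h2f : iteratedDeriv l (fun s : ℝ => (2:ℂ) * (f s : ℂ)) (t i) = 0 := by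
      have hg := iteratedDeriv_clm ((2 : ℂ) • Complex.ofRealCLM) f l (hsmooth l) (t i)
      simp only [ContinuousLinearMap.smul_apply, Complex.ofRealCLM_apply, smul_eq_mul] at hg
      rw [hg, hder i l hl]
      simp
    have hS := congrFun (iter_sum4 q0 q1 q2 q3 ((π:ℂ)*Complex.I*(-3)) ((π:ℂ)*Complex.I*(-1))
      ((π:ℂ)*Complex.I) ((π:ℂ)*Complex.I*3) l) (t i)
    rw [hfH, h2f] at hS
    set w : ℂ := Complex.exp (-((π:ℂ)*Complex.I*(t i))) with hwdef
    have hzw : z i * w = 1 := by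
      rw [hzdef, hwdef, ← Complex.exp_add]; simp
    have hev0 : Complex.exp ((π:ℂ)*Complex.I*(-3)*(t i)) = w^3 := by
      rw [hwdef, ← Complex.exp_nat_mul]
      congr 1; push_cast; ring
    have hev1 : Complex.exp ((π:ℂ)*Complex.I*(-1)*(t i)) = w := by
      rw [hwdef]; congr 1; ring
    have hev3 : Complex.exp ((π:ℂ)*Complex.I*3*(t i)) = (z i)^3 := by
      rw [hzdef, ← Complex.exp_nat_mul]
      congr 1; push_cast; ring
    rw [hev0, hev1, hev3] at hS
    have hv : ((π:ℂ)*Complex.I) ≠ 0 :=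
      mul_ne_zero (Complex.ofReal_ne_zero.mpr Real.pi_ne_zero) Complex.I_ne_zero
    have hT : q0*(-3:ℂ)^l*w^3 + q1*(-1:ℂ)^l*w + q2*(z i) + q3*(3:ℂ)^l*(z i)^3 = 0 := by
      have hfac : ((π:ℂ)*Complex.I)^l *
          (q0*(-3:ℂ)^l*w^3 + q1*(-1:ℂ)^l*w + q2*(z i) + q3*(3:ℂ)^l*(z i)^3)
          = q0 * ((π:ℂ)*Complex.I*(-3))^l * w^3 + q1 * ((π:ℂ)*Complex.I*(-1))^l * w
            + q2 * ((π:ℂ)*Complex.I)^l * (z i) + q3 * ((π:ℂ)*Complex.I*3)^l * (z i)^3 := by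
        ring
      have h0 : ((π:ℂ)*Complex.I)^l *
          (q0*(-3:ℂ)^l*w^3 + q1*(-1:ℂ)^l*w + q2*(z i) + q3*(3:ℂ)^l*(z i)^3) = 0 := by
        rw [hfac]; exact hS.symm
      exact (mul_eq_zero.mp h0).resolve_left (pow_ne_zero _ hv)
    linear_combination (z i)^3 * hT
      - (q0*(-3:ℂ)^l*((z i*w)^2 + z i*w + 1) + q1*(-1:ℂ)^l*(z i)^2) * hzw
  -- Q is nonzero
  have hQne : Q ≠ 0 := by
    intro h0
    have hc1 : q1 = 0 := by
      have := congrArg (fun p => Polynomial.coeff p 1) h0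
      simpa [hQ, coeff_add, coeff_C_mul, coeff_X_pow, coeff_C, coeff_X] using this
    have hc3 : q3 = 0 := by
      have := congrArg (fun p => Polynomial.coeff p 3) h0
      simpa [hQ, coeff_add, coeff_C_mul, coeff_X_pow, coeff_C, coeff_X] using this
    rw [hq1, Complex.ext_iff] at hc1
    rw [hq3, Complex.ext_iff] at hc3
    simp at hc1 hc3
    obtain ⟨ha0, hb0⟩ := hc1
    obtain ⟨hc0, hd0⟩ := hc3
    rw [ha] at ha0; rw [hb] at hb0; rw [hc] at hc0; rw [hd] at hd0
    have hs3 : (0:ℝ) < Real.sqrt 3 := Real.sqrt_pos.mpr (by norm_num)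
    apply hne
    funext i
    have h0z : h 0 = 0 := by linarith
    have h2z : h 2 = 0 := by
      have : Real.sqrt 3 * h 2 = 0 := by linarith
      rcases mul_eq_zero.mp this with hh | hh
      · linarith
      · exact hh
    have h3z : h 3 = 0 := by linarith
    have h1z : h 1 = 0 := by
      have : Real.sqrt 3 * h 1 = 0 := by linarith
      rcases mul_eq_zero.mp this with hh | hh
      · linarith
      · exact hh
    fin_cases i <;> simp [h0z, h1z, h2z, h3z]
  have hdeg : Q.natDegree ≤ 3 := by
    rw [hQ]; compute_degree
  -- derivative computations
  have hQd1 : derivative Q = C (3*q3) * X^2 + C (2*q2) * X + C q1 := by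
    rw [hQ]; simp [derivative_add, derivative_mul, derivative_X_pow, C_mul, map_ofNat]; ring
  have hQd2 : derivative (derivative Q) = C (6*q3) * X + C (2*q2) := by
    rw [hQd1]
    simp [derivative_add, derivative_mul, derivative_X_pow, C_mul, map_ofNat, Nat.cast_ofNat]
    ring
  have hQd3 : derivative (derivative (derivative Q)) = C (6*q3) := by
    rw [hQd2]
    simp [derivative_add, derivative_mul, derivative_X_pow, C_mul, map_ofNat, Nat.cast_ofNat]
  -- roots
  have hroot : ∀ i, ∀ l, l ≤ m i - 1 → (Polynomial.derivative^[l] Q).IsRoot (u i) := by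
    intro i l hl
    have hm1 := hm i
    have hlm : l < m i := by omega
    rcases Nat.lt_or_ge l 4 with h4 | h4
    · have hu2 : u i = z i ^ 2 := rfl
      interval_cases l
      · have E0 := hE i 0 (by omega)
        simp only [Function.iterate_zero, id_eq, IsRoot.def, hQ, eval_add, eval_mul, eval_pow,
          eval_C, eval_X, hu2]
        linear_combination E0
      · have E0 := hE i 0 (by omega)
        have E1 := hE i 1 (by omega)
        simp only [Function.iterate_one, IsRoot.def, hQd1, eval_add, eval_mul, eval_pow,
          eval_C, eval_X, hu2]
        refine (mul_eq_zero.mp ?_).resolve_left (pow_ne_zero 2 (hz0 i))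
        linear_combination (3/2:ℂ)*E0 + (1/2:ℂ)*E1
      · have E0 := hE i 0 (by omega)
        have E1 := hE i 1 (by omega)
        have E2 := hE i 2 (by omega)
        have hit : Polynomial.derivative^[2] Q = C (6*q3) * X + C (2*q2) := by
          rw [Function.iterate_succ_apply', Function.iterate_one, hQd2]
        simp only [hit, IsRoot.def, eval_add, eval_mul, eval_pow, eval_C, eval_X, hu2]
        refine (mul_eq_zero.mp ?_).resolve_left (pow_ne_zero 4 (hz0 i))
        linear_combination (3/4:ℂ)*E0 + E1 + (1/4:ℂ)*E2
      · have E0 := hE i 0 (by omega)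
        have E1 := hE i 1 (by omega)
        have E2 := hE i 2 (by omega)
        have E3 := hE i 3 (by omega)
        have hit : Polynomial.derivative^[3] Q = C (6*q3) := by
          rw [Function.iterate_succ_apply', Function.iterate_succ_apply', Function.iterate_one,
            hQd3]
        simp only [hit, IsRoot.def, eval_C]
        refine (mul_eq_zero.mp ?_).resolve_left (pow_ne_zero 6 (hz0 i))
        linear_combination (-3/8:ℂ)*E0 - (1/8:ℂ)*E1 + (3/8:ℂ)*E2 + (1/8:ℂ)*E3
    · rw [Polynomial.iterate_derivative_eq_zero (lt_of_le_of_lt hdeg h4)]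
      simp
  -- injectivity of u
  have huinj : Function.Injective u := by
    intro i k hik
    apply hinj
    have e : ∀ s : ℝ, Complex.exp ((π:ℂ)*Complex.I*s)^2 = Complex.exp (((2*π*s : ℝ)) * Complex.I) := by
      intro s
      rw [← Complex.exp_nat_mul]
      congr 1; push_cast; ring
    have h1 : Complex.exp (((2*π*(t i) : ℝ)) * Complex.I) = Complex.exp (((2*π*(t k) : ℝ)) * Complex.I) := by
      rw [← e, ← e]; exact hik
    rw [Complex.exp_eq_exp_iff_exists_int] at h1
    obtain ⟨n, hn⟩ := h1
    have him := congrArg Complex.im hn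
    simp [Complex.add_im, Complex.mul_im, Complex.mul_re] at him
    -- him : 2*π*t i = 2*π*t k + n*(2*π)  (in some form)
    have hpi := Real.pi_pos
    have hti := ht i
    have htk := ht k
    simp only [mem_Ioo] at hti htk
    have hnval : (n:ℝ) = t i - t k := by
      have hπ : (2*π : ℝ) ≠ 0 := by positivity
      refine mul_left_cancel₀ hπ ?_
      linear_combination -him
    have hn0 : n = 0 := by
      have h1' : |(n:ℝ)| < 1 := by
        rw [abs_lt, hnval]; constructor <;> nlinarith [hti.1, hti.2, htk.1, htk.2]
      have h2' : |n| < 1 := by exact_mod_cast h1'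
      have h3' := abs_lt.mp h2'
      omega
    have h00 : ((0:ℤ):ℝ) = t i - t k := hn0 ▸ hnval
    push_cast at h00
    linarith
  -- count roots
  have hcount : ∀ i, m i ≤ Q.roots.count (u i) := by
    intro i
    rw [Polynomial.count_roots]
    have := Polynomial.lt_rootMultiplicity_of_isRoot_iterate_derivative hQne
      (fun l hl => hroot i l hl)
    have hm1 := hm i
    omega
  calc ∑ i, m i ≤ ∑ i, Q.roots.count (u i) := Finset.sum_le_sum fun i _ => hcount i
    _ = ∑ x ∈ Finset.univ.image u, Q.roots.count x :=
        (Finset.sum_image (g := u) (f := fun x => Q.roots.count x) (fun x _ y _ hxy => huinj hxy)).symm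
    _ ≤ Multiset.card Q.roots := Stmt16Aux.sum_count_le _ _
    _ ≤ Q.natDegree := Q.card_roots'
    _ ≤ 3 := hdeg

end Stmt16Aux

/-- The curve `γ₁² ∈ LS³(1, −1)` is convex: it meets every hyperplane
through the origin of `ℝ⁴` with total multiplicity at most 3 on `(0,1)`. -/
theorem stmt_16 : ∀ h : Fin 4 → ℝ, h ≠ 0 → MultAtMost gamma12 0 1 h 3 := Stmt16Aux.main
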